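/- Let E be a locally convex space such that the identity map from E'_{w*} to E'_β with its weak topology is sequentially continuous, and suppose there is a continuous linear operator T : c₀ → E whose image of the unit ball is not barrel-precompact in E. Then E is not Gelfand–Phillips. -/

import Mathlib

open Filter Topology Pointwise ZeroAtInfty

section Defs

variable {E : Type*} [AddCommGroup E] [Module ℝ E] [TopologicalSpace E]

/-- A *barrel* is a closed, balanced, convex, absorbing set. -/
def IsBarrel (B : Set E) : Prop :=
  IsClosed B ∧ Balanced ℝ B ∧ Convex ℝ B ∧ Absorbent ℝ B

/-- A set is *barrel-bounded* if it is absorbed by every barrel. -/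
def BarrelBounded (A : Set E) : Prop :=
  ∀ B : Set E, IsBarrel B → ∃ c : ℝ, A ⊆ c • B

/-- A set is *barrel-precompact* if it is precompact in the topology generated by barrels. -/
def BarrelPrecompact (A : Set E) : Prop :=
  ∀ B : Set E, IsBarrel B → ∃ F : Set E, F.Finite ∧ A ⊆ F + B

/-- A set `A` is *limited* if every weak* null sequence of continuous functionals converges
to `0` uniformly on `A`. -/
def LimitedSet (A : Set E) : Prop :=
  ∀ χ : ℕ → E →L[ℝ] ℝ, (∀ x : E, Tendsto (fun n => χ n x) atTop (𝓝 0)) →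
    ∀ ε : ℝ, 0 < ε → ∀ᶠ n in atTop, ∀ a ∈ A, |χ n a| ≤ ε

/-- `E` is *Gelfand–Phillips* if every barrel-bounded limited set is barrel-precompact. -/
def GelfandPhillips (E : Type*) [AddCommGroup E] [Module ℝ E] [TopologicalSpace E] : Prop :=
  ∀ A : Set E, BarrelBounded A → LimitedSet A → BarrelPrecompact A

end Defs




noncomputable section AuxC0

/-- The indicator of `{k}` as an element of `c₀`. -/
def ee (k : ℕ) : C₀(ℕ, ℝ) :=
  { toFun := fun m => if m = k then (1:ℝ) else 0
    continuous_toFun := continuous_of_discreteTopology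
    zero_at_infty' := by
      rw [cocompact_eq_atTop]
      refine tendsto_const_nhds.congr' ?_
      filter_upwards [eventually_ge_atTop (k+1)] with m hm
      simp [Nat.ne_of_gt hm] }

@[simp] lemma ee_apply (k m : ℕ) : ee k m = if m = k then (1:ℝ) else 0 := rfl

/-- Truncation of a sequence to the first `N` coordinates, in `c₀`. -/
def pc (b : ℕ → ℝ) (N : ℕ) : C₀(ℕ, ℝ) :=
  { toFun := fun m => if m < N then b m else 0
    continuous_toFun := continuous_of_discreteTopology
    zero_at_infty' := by
      rw [cocompact_eq_atTop]
      refine tendsto_const_nhds.congr' ?_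
      filter_upwards [eventually_ge_atTop N] with m hm
      simp [Nat.not_lt.mpr hm] }

@[simp] lemma pc_apply (b : ℕ → ℝ) (N m : ℕ) : pc b N m = if m < N then b m else 0 := rfl

lemma pc_eq_sum (b : ℕ → ℝ) (N : ℕ) :
    pc b N = ∑ k ∈ Finset.range N, b k • ee k := by
  induction N with
  | zero => ext m; simp
  | succ n ih =>
    rw [Finset.sum_range_succ, ← ih]
    ext m
    simp only [ZeroAtInftyContinuousMap.coe_add, Pi.add_apply, pc_apply,
      ZeroAtInftyContinuousMap.coe_smul, Pi.smul_apply, ee_apply, smul_eq_mul]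
    rcases lt_trichotomy m n with h | h | h
    · simp [h, h.trans (Nat.lt_succ_self n), h.ne]
    · subst h; simp
    · simp [Nat.not_lt.mpr (le_of_lt h), Nat.not_lt.mpr (Nat.succ_le_of_lt h), h.ne']

lemma norm_apply_le_c0 (x : C₀(ℕ, ℝ)) (m : ℕ) : |x m| ≤ ‖x‖ := by
  rw [← ZeroAtInftyContinuousMap.norm_toBCF_eq_norm, ← Real.norm_eq_abs]
  exact x.toBCF.norm_coe_le_norm m

lemma norm_le_c0 {x : C₀(ℕ, ℝ)} {C : ℝ} (hC : 0 ≤ C) (h : ∀ m, |x m| ≤ C) : ‖x‖ ≤ C := by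
  rw [← ZeroAtInftyContinuousMap.norm_toBCF_eq_norm]
  exact (BoundedContinuousFunction.norm_le hC).2 fun m => by
    simpa [Real.norm_eq_abs] using h m

lemma pc_norm_le {b : ℕ → ℝ} (hb : ∀ k, |b k| ≤ 1) (N : ℕ) : ‖pc b N‖ ≤ 1 := by
  refine norm_le_c0 zero_le_one fun m => ?_
  simp only [pc_apply]
  split_ifs with h
  · exact hb m
  · simp

lemma pc_tendsto (x : C₀(ℕ, ℝ)) : Tendsto (fun N => pc (⇑x) N) atTop (𝓝 x) := by
  rw [Metric.tendsto_atTop]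
  intro ε hε
  have hx : Tendsto (⇑x) atTop (𝓝 (0:ℝ)) := by
    have := x.zero_at_infty'
    rwa [cocompact_eq_atTop] at this
  obtain ⟨N, hN⟩ := (Metric.tendsto_atTop.1 hx (ε/2) (half_pos hε))
  refine ⟨N, fun n hn => ?_⟩
  rw [dist_eq_norm]
  have hle : ‖pc (⇑x) n - x‖ ≤ ε/2 := by
    refine norm_le_c0 (le_of_lt (half_pos hε)) fun m => ?_
    have : (pc (⇑x) n - x) m = pc (⇑x) n m - x m := by
      simp [ZeroAtInftyContinuousMap.coe_sub]
    rw [this, pc_apply]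
    split_ifs with h
    · simp [le_of_lt (half_pos hε)]
    · have hm : N ≤ m := le_trans hn (Nat.not_lt.mp h)
      have := hN m hm
      rw [Real.dist_eq, sub_zero] at this
      simpa using this.le
  linarith [half_lt_self hε]

section Gfacts

lemma rsign_mul_self (x : ℝ) : Real.sign x * x = |x| := by
  rcases lt_trichotomy x 0 with h | h | h
  · rw [Real.sign_of_neg h, abs_of_neg h]; ring
  · simp [h]
  · rw [Real.sign_of_pos h, abs_of_pos h]; ring

lemma abs_sign_le (x : ℝ) : |Real.sign x| ≤ 1 := by
  rcases Real.sign_apply_eq x with h | h | h <;> simp [h]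

variable (g : C₀(ℕ, ℝ) →L[ℝ] ℝ)

lemma g_pc (b : ℕ → ℝ) (N : ℕ) :
    g (pc b N) = ∑ k ∈ Finset.range N, b k * g (ee k) := by
  rw [pc_eq_sum, map_sum]
  exact Finset.sum_congr rfl fun k _ => by rw [map_smul]; rfl

lemma summable_g : Summable fun k => |g (ee k)| := by
  refine summable_of_sum_range_le (fun k => abs_nonneg _) (c := ‖g‖) fun N => ?_
  have h1 : ∑ k ∈ Finset.range N, |g (ee k)|
      = g (pc (fun k => Real.sign (g (ee k))) N) := by
    rw [g_pc]
    exact Finset.sum_congr rfl fun k _ => (rsign_mul_self _).symm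
  rw [h1]
  calc g (pc (fun k => Real.sign (g (ee k))) N)
      ≤ ‖g (pc (fun k => Real.sign (g (ee k))) N)‖ := le_abs_self _
    _ ≤ ‖g‖ * ‖pc (fun k => Real.sign (g (ee k))) N‖ := g.le_opNorm _
    _ ≤ ‖g‖ * 1 := by
        exact mul_le_mul_of_nonneg_left (pc_norm_le (fun k => abs_sign_le _) N) (norm_nonneg g)
    _ = ‖g‖ := mul_one _

lemma abs_g_le {x : C₀(ℕ, ℝ)} (hx : ‖x‖ ≤ 1) : |g x| ≤ ∑' k, |g (ee k)| := by
  have h1 : Tendsto (fun N => |g (pc (⇑x) N)|) atTop (𝓝 |g x|) :=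
    ((g.continuous.tendsto x).comp (pc_tendsto x)).abs
  refine le_of_tendsto h1 (Eventually.of_forall fun N => ?_)
  rw [g_pc]
  calc |∑ k ∈ Finset.range N, x k * g (ee k)|
      ≤ ∑ k ∈ Finset.range N, |x k * g (ee k)| := Finset.abs_sum_le_sum_abs _ _
    _ ≤ ∑ k ∈ Finset.range N, |g (ee k)| := by
        refine Finset.sum_le_sum fun k _ => ?_
        rw [abs_mul]
        have := (norm_apply_le_c0 x k).trans hx
        nlinarith [abs_nonneg (g (ee k)), abs_nonneg (x k)]
    _ ≤ ∑' k, |g (ee k)| := Summable.sum_le_tsum _ (fun k _ => abs_nonneg _) (summable_g g)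

end Gfacts

end AuxC0



lemma sign_mul_self_aux (x : ℝ) : Real.sign x * x = |x| := by
  rcases lt_trichotomy x 0 with h | h | h
  · rw [Real.sign_of_neg h, abs_of_neg h]; ring
  · simp [h]
  · rw [Real.sign_of_pos h, abs_of_pos h]; ring

set_option maxHeartbeats 1000000 in
lemma schur_aux (a : ℕ → ℕ → ℝ) (hsum : ∀ n, Summable fun k => |a n k|)
    (hb : ∀ b : ℕ → ℝ, (∀ k, |b k| ≤ 1) →
      Tendsto (fun n => ∑' k, b k * a n k) atTop (𝓝 0))
    {ε : ℝ} (hε : 0 < ε) : ∀ᶠ n in atTop, (∑' k, |a n k|) ≤ ε := by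
  by_contra hcon
  have hfreq : ∃ᶠ n in atTop, ε < ∑' k, |a n k| := by
    rw [Filter.not_eventually] at hcon
    exact hcon.mono fun n h => not_le.1 h
  -- coordinatewise null
  have hcoord : ∀ k, Tendsto (fun n => a n k) atTop (𝓝 0) := by
    intro k
    have hind : ∀ j, |(fun j => if j = k then (1:ℝ) else 0) j| ≤ 1 := by
      intro j; dsimp only; split_ifs <;> simp
    have heq : ∀ n, (∑' j, (if j = k then (1:ℝ) else 0) * a n j) = a n k := by
      intro n
      have h' : ∀ j, (if j = k then (1:ℝ) else 0) * a n j
          = if j = k then a n k else 0 := by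
        intro j; split_ifs with h
        · subst h; ring
        · ring
      rw [tsum_congr h', tsum_ite_eq]
    exact (hb _ hind).congr heq
  -- heads tend to zero
  have hhead : ∀ M : ℕ, Tendsto (fun n => ∑ k ∈ Finset.range M, |a n k|) atTop (𝓝 0) := by
    intro M
    have : Tendsto (fun n => ∑ k ∈ Finset.range M, |a n k|) atTop
        (𝓝 (∑ k ∈ Finset.range M, |(0:ℝ)|)) :=
      tendsto_finset_sum _ fun k _ => (hcoord k).abs
    simpa using this
  -- step existence
  have step : ∀ q : ℕ × ℕ, ∃ q' : ℕ × ℕ, q.1 < q'.1 ∧ q.2 < q'.2 ∧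
      ε < (∑' k, |a q'.1 k|) ∧ (∑ k ∈ Finset.range q.2, |a q'.1 k|) < ε/8 ∧
      (∑' k, |a q'.1 (k + q'.2)|) < ε/8 := by
    intro q
    have hev : ∀ᶠ n in atTop, (∑ k ∈ Finset.range q.2, |a n k|) < ε/8 :=
      (hhead q.2).eventually (gt_mem_nhds (by positivity))
    obtain ⟨n, ⟨hn1, hn2⟩, hn3⟩ :=
      ((hfreq.and_eventually hev).and_eventually (eventually_gt_atTop q.1)).exists
    have htail : Tendsto (fun M => ∑' k, |a n (k + M)|) atTop (𝓝 0) :=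
      tendsto_sum_nat_add (fun k => |a n (k)|)
    obtain ⟨M, hM1, hM2⟩ :=
      ((htail.eventually (gt_mem_nhds (by positivity : (0:ℝ) < ε/8))).and
        (eventually_gt_atTop q.2)).exists
    exact ⟨(n, M), hn3, hM2, hn1, hn2, hM1⟩
  choose f hf1 hf2 hf3 hf4 hf5 using step
  obtain ⟨p, hp0, hpsucc⟩ : ∃ p : ℕ → ℕ × ℕ, p 0 = f (0,0) ∧ ∀ i, p (i+1) = f (p i) :=
    ⟨fun i => Nat.rec (f (0,0)) (fun _ q => f q) i, rfl, fun _ => rfl⟩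
  obtain ⟨M, hM0, hMsucc⟩ : ∃ M : ℕ → ℕ, M 0 = 0 ∧ ∀ i, M (i+1) = (p i).2 :=
    ⟨fun i => Nat.rec 0 (fun j _ => (p j).2) i, rfl, fun _ => rfl⟩
  have hnmono : StrictMono (fun i => (p i).1) := strictMono_nat_of_lt_succ fun i => by
    show (p i).1 < (p (i+1)).1
    rw [hpsucc i]
    exact hf1 (p i)
  have hMmono : StrictMono M := strictMono_nat_of_lt_succ fun i => by
    cases i with
    | zero => rw [hM0, hMsucc 0, hp0]; exact hf2 (0,0)
    | succ j => rw [hMsucc (j+1), hMsucc j, hpsucc j]; exact hf2 (p j)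
  have hbig : ∀ i, ε < ∑' k, |a (p i).1 k| := by
    intro i
    cases i with
    | zero => rw [hp0]; exact hf3 (0,0)
    | succ j => rw [hpsucc j]; exact hf3 (p j)
  have hheadi : ∀ i, (∑ k ∈ Finset.range (M i), |a (p i).1 k|) < ε/8 := by
    intro i
    cases i with
    | zero => rw [hM0]; simpa using (by positivity : (0:ℝ) < ε/8)
    | succ j => rw [hMsucc j, hpsucc j]; exact hf4 (p j)
  have htaili : ∀ i, (∑' k, |a (p i).1 (k + M (i + 1))|) < ε/8 := by
    intro i
    cases i with
    | zero => rw [hMsucc 0, hp0]; exact hf5 (0,0)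
    | succ j => rw [hMsucc (j+1), hpsucc j]; exact hf5 (p j)
  -- the index function
  have hcex : ∀ k : ℕ, ∃ i, k < M (i + 1) := fun k =>
    ⟨k, lt_of_lt_of_le (Nat.lt_succ_self k) hMmono.le_apply⟩
  obtain ⟨c, hc1, hc2⟩ :
      ∃ c : ℕ → ℕ, (∀ k, k < M (c k + 1)) ∧ ∀ k i, k < M (i+1) → c k ≤ i :=
    ⟨fun k => Nat.find (hcex k), fun k => Nat.find_spec (hcex k),
      fun k i h => Nat.find_le h⟩
  have hc_eq : ∀ i k, M i ≤ k → k < M (i + 1) → c k = i := by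
    intro i k h1 h2
    refine le_antisymm (hc2 k i h2) ?_
    by_contra h
    push_neg at h
    have : M (c k + 1) ≤ M i := hMmono.monotone (Nat.succ_le_of_lt h)
    exact absurd ((hc1 k).trans_le this) (not_lt.mpr h1)
  -- the sign sequence
  set b : ℕ → ℝ := fun k => Real.sign (a (p (c k)).1 k) with hbdef
  have hb_le : ∀ k, |b k| ≤ 1 := by
    intro k
    rcases Real.sign_apply_eq (a (p (c k)).1 k) with h | h | h <;> simp [hbdef, h]
  -- the lower bound along the subsequence
  have hlow : ∀ i, ε/2 < ∑' k, b k * a (p i).1 k := by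
    intro i
    set N := (p i).1 with hN
    set L := M i with hL
    set R := M (i + 1) with hR
    have hLR : L ≤ R := (hMmono (Nat.lt_succ_self i)).le
    have hsumt : Summable fun k => b k * a N k := by
      refine Summable.of_norm_bounded (hsum N) fun k => ?_
      rw [Real.norm_eq_abs, abs_mul]
      nlinarith [hb_le k, abs_nonneg (a N k), abs_nonneg (b k)]
    have hsplit : (∑' k, b k * a N k)
        = (∑ k ∈ Finset.range R, b k * a N k) + ∑' k, b (k + R) * a N (k + R) :=
      (Summable.sum_add_tsum_nat_add R hsumt).symm
    have hsplita : (∑' k, |a N k|)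
        = (∑ k ∈ Finset.range R, |a N k|) + ∑' k, |a N (k + R)| :=
      (Summable.sum_add_tsum_nat_add R (hsum N)).symm
    have hrange : (∑ k ∈ Finset.range R, b k * a N k)
        = (∑ k ∈ Finset.range L, b k * a N k) + ∑ k ∈ Finset.Ico L R, b k * a N k := by
      rw [Finset.range_eq_Ico, Finset.range_eq_Ico, ← Finset.sum_Ico_consecutive _ (Nat.zero_le L) hLR]
    have hrangea : (∑ k ∈ Finset.range R, |a N k|)
        = (∑ k ∈ Finset.range L, |a N k|) + ∑ k ∈ Finset.Ico L R, |a N k| := by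
      rw [Finset.range_eq_Ico, Finset.range_eq_Ico, ← Finset.sum_Ico_consecutive _ (Nat.zero_le L) hLR]
    -- on the block, b k * a N k = |a N k|
    have hblock : (∑ k ∈ Finset.Ico L R, b k * a N k) = ∑ k ∈ Finset.Ico L R, |a N k| := by
      refine Finset.sum_congr rfl fun k hk => ?_
      rw [Finset.mem_Ico] at hk
      have hck : c k = i := hc_eq i k hk.1 hk.2
      show Real.sign (a (p (c k)).1 k) * a N k = |a N k|
      rw [hck, ← hN]
      exact sign_mul_self_aux _
    have h1 : |∑ k ∈ Finset.range L, b k * a N k| ≤ ∑ k ∈ Finset.range L, |a N k| := by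
      refine (Finset.abs_sum_le_sum_abs _ _).trans (Finset.sum_le_sum fun k _ => ?_)
      rw [abs_mul]
      nlinarith [hb_le k, abs_nonneg (a N k), abs_nonneg (b k)]
    have h2 : |∑' k, b (k + R) * a N (k + R)| ≤ ∑' k, |a N (k + R)| := by
      have hs1 : Summable fun k => b (k + R) * a N (k + R) :=
        (summable_nat_add_iff R).mpr hsumt
      have hs2 : Summable fun k => |a N (k + R)| :=
        (summable_nat_add_iff R).mpr (hsum N)
      have habs : Summable fun k => |b (k + R) * a N (k + R)| := hs1.abs
      calc |∑' k, b (k + R) * a N (k + R)| ≤ ∑' k, |b (k + R) * a N (k + R)| := by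
            have hn := norm_tsum_le_tsum_norm (f := fun k => b (k + R) * a N (k + R))
              (by simpa only [Real.norm_eq_abs] using habs)
            simpa only [Real.norm_eq_abs] using hn
        _ ≤ ∑' k, |a N (k + R)| := by
            refine Summable.tsum_le_tsum (fun k => ?_) habs hs2
            rw [abs_mul]
            nlinarith [hb_le (k + R), abs_nonneg (a N (k + R)), abs_nonneg (b (k + R))]
    have hhead' := hheadi i
    have htail' := htaili i
    have hbig' := hbig i
    rw [← hN, ← hL] at hhead'
    rw [← hN, ← hR] at htail'
    rw [← hN] at hbig'
    have hblockabs : ε - ε/8 - ε/8 < ∑ k ∈ Finset.Ico L R, |a N k| := by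
      have h3 := hsplita
      rw [hrangea] at h3
      linarith
    rw [hsplit, hrange, hblock]
    have hh1 : -(ε/8) ≤ ∑ k ∈ Finset.range L, b k * a N k := by
      have := (abs_le.mp h1).1
      linarith
    have hh2 : -(ε/8) ≤ ∑' k, b (k + R) * a N (k + R) := by
      have := (abs_le.mp h2).1
      linarith
    linarith
  -- contradiction
  have htend := hb b hb_le
  have hsub : Tendsto (fun i => ∑' k, b k * a (p i).1 k) atTop (𝓝 0) :=
    htend.comp hnmono.tendsto_atTop
  have hev := hsub.eventually (gt_mem_nhds (by positivity : (0:ℝ) < ε/2))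
  obtain ⟨i, hi⟩ := hev.exists
  exact absurd (hlow i) (not_lt.mpr hi.le)


section PsiPart

variable {E : Type*} [AddCommGroup E] [Module ℝ E] [TopologicalSpace E]
    [IsTopologicalAddGroup E] [ContinuousSMul ℝ E]

variable (T : C₀(ℕ, ℝ) →L[ℝ] E)

lemma summable_mul (b : ℕ → ℝ) (hb : ∀ k, |b k| ≤ 1) (χ : E →L[ℝ] ℝ) :
    Summable fun k => b k * χ (T (ee k)) := by
  refine Summable.of_norm_bounded (summable_g (χ.comp T)) fun k => ?_
  rw [Real.norm_eq_abs, abs_mul]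
  have h1 : |χ (T (ee k))| = |(χ.comp T) (ee k)| := rfl
  rw [h1]
  nlinarith [hb k, abs_nonneg ((χ.comp T) (ee k)), abs_nonneg (b k)]

/-- The `ℓ∞`-type functional on the strong dual of `E`. -/
noncomputable def psiL (b : ℕ → ℝ) (hb : ∀ k, |b k| ≤ 1) : (E →L[ℝ] ℝ) →ₗ[ℝ] ℝ where
  toFun χ := ∑' k, b k * χ (T (ee k))
  map_add' χ χ' := by
    have h : ∀ k, b k * (χ + χ') (T (ee k))
        = b k * χ (T (ee k)) + b k * χ' (T (ee k)) := by
      intro k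
      simp only [ContinuousLinearMap.add_apply]
      ring
    rw [tsum_congr h, Summable.tsum_add (summable_mul T b hb χ) (summable_mul T b hb χ')]
  map_smul' r χ := by
    have h : ∀ k, b k * (r • χ) (T (ee k)) = r * (b k * χ (T (ee k))) := by
      intro k
      simp only [ContinuousLinearMap.coe_smul', Pi.smul_apply, smul_eq_mul]
      ring
    rw [tsum_congr h, tsum_mul_left]
    rfl

lemma psiL_bound (b : ℕ → ℝ) (hb : ∀ k, |b k| ≤ 1) {χ : E →L[ℝ] ℝ} {C : ℝ} (hC : 0 ≤ C)
    (h : ∀ y ∈ T '' Metric.closedBall 0 1, |χ y| ≤ C) :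
    |psiL T b hb χ| ≤ C := by
  have hpart : ∀ N, |∑ k ∈ Finset.range N, b k * χ (T (ee k))| ≤ C := by
    intro N
    have h1 : ∑ k ∈ Finset.range N, b k * χ (T (ee k)) = (χ.comp T) (pc b N) := by
      rw [g_pc (χ.comp T) b N]; rfl
    rw [h1]
    exact h (T (pc b N)) ⟨pc b N, by
      simpa [Metric.mem_closedBall, dist_zero_right] using pc_norm_le hb N, rfl⟩
  have htend : Tendsto (fun N => |∑ k ∈ Finset.range N, b k * χ (T (ee k))|) atTop
      (𝓝 |psiL T b hb χ|) :=
    ((summable_mul T b hb χ).hasSum.tendsto_sum_nat).abs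
  exact le_of_tendsto htend (Eventually.of_forall hpart)

lemma psiL_continuous (b : ℕ → ℝ) (hb : ∀ k, |b k| ≤ 1) :
    Continuous (psiL T b hb) := by
  refine continuous_of_continuousAt_zero (psiL T b hb).toAddMonoidHom ?_
  rw [ContinuousAt]
  have h0 : (psiL T b hb).toAddMonoidHom 0 = 0 := map_zero _
  rw [h0]
  rw [NormedAddCommGroup.tendsto_nhds_zero]
  intro ε hε
  have hbdd : Bornology.IsVonNBounded ℝ (T '' Metric.closedBall 0 1) :=
    (NormedSpace.isVonNBounded_closedBall ℝ _ 1).image T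
  have hmem : {χ : E →L[ℝ] ℝ | ∀ y ∈ T '' Metric.closedBall 0 1,
      χ y ∈ Metric.closedBall (0:ℝ) (ε/2)} ∈ 𝓝 (0 : E →L[ℝ] ℝ) :=
    ContinuousLinearMap.hasBasis_nhds_zero.mem_of_mem
      (i := (T '' Metric.closedBall 0 1, Metric.closedBall (0:ℝ) (ε/2)))
      ⟨hbdd, Metric.closedBall_mem_nhds 0 (half_pos hε)⟩
  filter_upwards [hmem] with χ hχ
  have : |psiL T b hb χ| ≤ ε/2 := by
    refine psiL_bound T b hb (le_of_lt (half_pos hε)) fun y hy => ?_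
    have := hχ y hy
    simpa [Metric.mem_closedBall, Real.dist_eq] using this
  calc ‖(psiL T b hb).toAddMonoidHom χ‖ = |psiL T b hb χ| := rfl
    _ ≤ ε/2 := this
    _ < ε := half_lt_self hε

/-- The bundled continuous functional. -/
noncomputable def psiCLM (b : ℕ → ℝ) (hb : ∀ k, |b k| ≤ 1) : (E →L[ℝ] ℝ) →L[ℝ] ℝ :=
  ⟨psiL T b hb, psiL_continuous T b hb⟩

@[simp] lemma psiCLM_apply (b : ℕ → ℝ) (hb : ∀ k, |b k| ≤ 1) (χ : E →L[ℝ] ℝ) :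
    psiCLM T b hb χ = ∑' k, b k * χ (T (ee k)) := rfl

end PsiPart


/-- A barrel in a Banach space contains a closed ball around the origin. -/
lemma barrel_contains_ball {X : Type*} [NormedAddCommGroup X] [NormedSpace ℝ X]
    [CompleteSpace X] {B : Set X} (hcl : IsClosed B) (hbal : Balanced ℝ B)
    (hcv : Convex ℝ B) (habs : Absorbent ℝ B) :
    ∃ r : ℝ, 0 < r ∧ Metric.closedBall 0 r ⊆ B := by
  have hcover : (⋃ m : ℕ, ((m : ℝ) + 1) • B) = Set.univ := by
    refine Set.eq_univ_of_forall fun x => ?_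
    have h1 : Tendsto (fun m : ℕ => ((m : ℝ) + 1)) atTop atTop :=
      tendsto_atTop_add_const_right _ 1 tendsto_natCast_atTop_atTop
    have htend : Tendsto (fun m : ℕ => ((m : ℝ) + 1)) atTop (Bornology.cobounded ℝ) := by
      rw [← tendsto_norm_atTop_iff_cobounded]
      refine h1.congr fun m => ?_
      rw [Real.norm_eq_abs, abs_of_pos (by positivity)]
    obtain ⟨m, hm⟩ := (htend.eventually (habs x)).exists
    exact Set.mem_iUnion.2 ⟨m, hm rfl⟩
  obtain ⟨m, hne⟩ := nonempty_interior_of_iUnion_of_closed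
    (fun m : ℕ => hcl.smul_of_ne_zero (by positivity : ((m : ℝ) + 1) ≠ 0)) hcover
  rw [interior_smul₀ (by positivity : ((m : ℝ) + 1) ≠ 0) B] at hne
  obtain ⟨y, hy⟩ := hne
  obtain ⟨z, hz, rfl⟩ := hy
  have hneg : -z ∈ B := hbal.neg_mem_iff.2 (interior_subset hz)
  have h0 : (0 : X) ∈ interior B := by
    have := hcv.combo_interior_self_mem_interior hz hneg
      (by norm_num : (0:ℝ) < 1/2) (by norm_num : (0:ℝ) ≤ 1/2) (by norm_num)
    simpa [smul_neg] using this
  have hnhds : B ∈ 𝓝 (0 : X) := mem_interior_iff_mem_nhds.1 h0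
  obtain ⟨r, hr, hsub⟩ := Metric.nhds_basis_closedBall.mem_iff.1 hnhds
  exact ⟨r, hr, hsub⟩
/-- If the identity map `E'_{w*} → (E'_β)_w` is sequentially continuous and there is a
continuous linear operator `T : c₀ → E` whose image of the closed unit ball is not
barrel-precompact, then `E` is not Gelfand–Phillips.  (Here the strong dual `E'_β` is the
space of continuous linear functionals with the topology of uniform convergence on bounded
sets, and its weak topology is tested against its own continuous linear functionals.) -/
theorem stmt11 {E : Type*} [AddCommGroup E] [Module ℝ E] [TopologicalSpace E]
    [IsTopologicalAddGroup E] [ContinuousSMul ℝ E] [LocallyConvexSpace ℝ E]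
    (hseq : ∀ χ : ℕ → E →L[ℝ] ℝ,
      (∀ x : E, Tendsto (fun n => χ n x) atTop (𝓝 0)) →
      ∀ Ψ : (E →L[ℝ] ℝ) →L[ℝ] ℝ, Tendsto (fun n => Ψ (χ n)) atTop (𝓝 0))
    (T : C₀(ℕ, ℝ) →L[ℝ] E)
    (hT : ¬ BarrelPrecompact (T '' Metric.closedBall 0 1)) :
    ¬ GelfandPhillips E := by
  intro hGP
  apply hT
  set A := ⇑T '' Metric.closedBall 0 1 with hA
  have hBB : BarrelBounded A := by
    rintro B ⟨hcl, hbal, hcv, habs⟩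
    have hcl' : IsClosed (⇑T ⁻¹' B) := hcl.preimage T.continuous
    have hcv' : Convex ℝ (⇑T ⁻¹' B) := hcv.linear_preimage (T : C₀(ℕ, ℝ) →ₗ[ℝ] E)
    have hbal' : Balanced ℝ (⇑T ⁻¹' B) := by
      rw [balanced_iff_smul_mem]
      intro a ha x hx
      have hTs : T (a • x) = a • T x := map_smul T a x
      simp only [Set.mem_preimage, hTs]
      exact balanced_iff_smul_mem.1 hbal ha hx
    have habs' : Absorbent ℝ (⇑T ⁻¹' B) := by
      intro x
      filter_upwards [habs (T x), Bornology.eventually_ne_cobounded (0 : ℝ)] with c hc hc0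
      intro y hy
      rw [Set.mem_singleton_iff] at hy
      subst hy
      obtain ⟨w, hw, hcw⟩ := Set.mem_smul_set.1 (hc rfl)
      refine Set.mem_smul_set.2 ⟨c⁻¹ • y, ?_, smul_inv_smul₀ hc0 y⟩
      show T (c⁻¹ • y) ∈ B
      rw [map_smul, ← hcw, smul_smul, inv_mul_cancel₀ hc0, one_smul]
      exact hw
    obtain ⟨r, hr, hsub⟩ := barrel_contains_ball hcl' hbal' hcv' habs'
    refine ⟨r⁻¹, ?_⟩
    rintro _ ⟨x, hx, rfl⟩
    have hxn : ‖x‖ ≤ 1 := mem_closedBall_zero_iff.1 hx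
    have hrx : r • x ∈ ⇑T ⁻¹' B := by
      apply hsub
      rw [Metric.mem_closedBall, dist_zero_right]
      calc ‖r • x‖ ≤ ‖r‖ * ‖x‖ := norm_smul_le r x
        _ ≤ r * 1 := by
            rw [Real.norm_eq_abs, abs_of_pos hr]
            exact mul_le_mul_of_nonneg_left hxn hr.le
        _ = r := mul_one r
    refine Set.mem_smul_set.2 ⟨T (r • x), hrx, ?_⟩
    rw [map_smul, smul_smul, inv_mul_cancel₀ hr.ne', one_smul]
  have hLim : LimitedSet A := by
    intro χ hχ ε hε
    have hsum : ∀ n, Summable fun k => |χ n (T (ee k))| := fun n =>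
      summable_g ((χ n).comp T)
    have hbt : ∀ b : ℕ → ℝ, (∀ k, |b k| ≤ 1) →
        Tendsto (fun n => ∑' k, b k * χ n (T (ee k))) atTop (𝓝 0) := by
      intro b hb
      exact hseq χ hχ (psiCLM T b hb)
    have hS := schur_aux (fun n k => χ n (T (ee k))) hsum hbt hε
    filter_upwards [hS] with n hn
    rintro _ ⟨x, hx, rfl⟩
    have hxn : ‖x‖ ≤ 1 := mem_closedBall_zero_iff.1 hx
    exact le_trans (abs_g_le ((χ n).comp T) hxn) hn
  exact hGP A hBB hLim
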